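/- Every valid (possibly fractional) allocation x can be represented as a convex combination of valid integral allocations: there exist valid integral allocations x^(1), …, x^(k) and nonnegative reals λ_1, …, λ_k summing to 1 with x = ∑_i λ_i x^(i). -/

import Mathlib

open Finset

/-- An allocation instance: quotas, eligibility sets, and priority relations. -/
structure AllocInstance (A C : Type*) where
  quota : C → ℕ
  elig : C → Set A
  prio : C → A → A → Prop

namespace AllocInstance

variable {A C : Type*} [Fintype A] [Fintype C]

/-- Strict priority: `a ≻_c a'`. -/
def Strict (I : AllocInstance A C) (c : C) (a a' : A) : Prop :=
  I.prio c a a' ∧ ¬ I.prio c a' a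

/-- The priority relation of each category is a total preorder on its eligible set. -/
def TotalPreorder (I : AllocInstance A C) : Prop :=
  (∀ c, ∀ a ∈ I.elig c, I.prio c a a) ∧
  (∀ c, ∀ a ∈ I.elig c, ∀ a' ∈ I.elig c, ∀ a'' ∈ I.elig c,
      I.prio c a a' → I.prio c a' a'' → I.prio c a a'') ∧
  (∀ c, ∀ a ∈ I.elig c, ∀ a' ∈ I.elig c, I.prio c a a' ∨ I.prio c a' a)

/-- The priority relation of each category is a (strict) total order on its eligible
set, i.e. an antisymmetric total preorder. -/
def StrictTotalPrio (I : AllocInstance A C) : Prop :=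
  I.TotalPreorder ∧
  (∀ c, ∀ a ∈ I.elig c, ∀ a' ∈ I.elig c, I.prio c a a' → I.prio c a' a → a = a')

/-- A feasible allocation: nonnegative, eligibility (ER), quotas (QR), unit demand. -/
def Feasible (I : AllocInstance A C) (x : A → C → ℝ) : Prop :=
  (∀ a c, 0 ≤ x a c) ∧
  (∀ a c, a ∉ I.elig c → x a c = 0) ∧
  (∀ c, ∑ a, x a c ≤ (I.quota c : ℝ)) ∧
  (∀ a, ∑ c, x a c ≤ 1)

/-- The size of an allocation. -/
def V (_I : AllocInstance A C) (x : A → C → ℝ) : ℝ := ∑ a, ∑ c, x a c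

/-- Respect for priorities (PR). -/
def PR (I : AllocInstance A C) (x : A → C → ℝ) : Prop :=
  ∀ c, ∀ a ∈ I.elig c, ∀ a' ∈ I.elig c,
    I.Strict c a' a → 0 < x a c → ∑ c', x a' c' = 1

/-- Pareto efficiency (PE). -/
def PE (I : AllocInstance A C) (x : A → C → ℝ) : Prop :=
  ¬ ∃ y, I.Feasible y ∧ I.PR y ∧
    (∀ a, ∑ c, x a c ≤ ∑ c, y a c) ∧ (∃ a, ∑ c, x a c < ∑ c, y a c)

/-- A valid allocation: feasible, respecting priorities, and Pareto efficient. -/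
def Valid (I : AllocInstance A C) (x : A → C → ℝ) : Prop :=
  I.Feasible x ∧ I.PR x ∧ I.PE x

/-- An integral allocation. -/
def Integral (_I : AllocInstance A C) (x : A → C → ℝ) : Prop :=
  ∀ a c, x a c = 0 ∨ x a c = 1

/-- A valid perturbation profile: positivity, small effect, consistency. -/
def ValidPerturbation (I : AllocInstance A C) (δ : A → C → ℝ) : Prop :=
  (∀ a c, 0 < δ a c) ∧
  (∑ a, ∑ c, δ a c ≤ 1 / 2) ∧
  (∀ c, ∀ a ∈ I.elig c, ∀ a' ∈ I.elig c, (I.prio c a a' ↔ δ a' c ≥ δ a c))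

/-- The perturbed objective `V_δ`. -/
def Vd (_I : AllocInstance A C) (δ x : A → C → ℝ) : ℝ :=
  ∑ a, ∑ c, x a c * (1 - δ a c)

/-- Category stability (CS): no cyclic trade among categories in which some category
passes its allocation to a strictly higher-priority agent. -/
def CS (I : AllocInstance A C) (x : A → C → ℝ) : Prop :=
  ¬ ∃ (j : ℕ) (c : ℕ → C) (a : ℕ → A),
      2 ≤ j ∧ c j = c 0 ∧ a j = a 0 ∧
      (∀ i < j, 0 < x (a i) (c i) ∧ I.prio (c i) (a (i + 1)) (a i)) ∧
      (∃ i < j, I.Strict (c i) (a (i + 1)) (a i))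

end AllocInstance

namespace SRaux

open scoped Classical

variable {A C : Type*} [Fintype A] [Fintype C]

/-- row sum -/
abbrev rsum (x : A → C → ℝ) (a : A) : ℝ := ∑ c, x a c

/-- column sum -/
abbrev csum (x : A → C → ℝ) (c : C) : ℝ := ∑ a, x a c

/-- a safe column for agent b: b eligible and all strict superiors are full in x. -/
def Safe (I : AllocInstance A C) (x : A → C → ℝ) (b : A) (c : C) : Prop :=
  b ∈ I.elig c ∧ ∀ a', a' ∈ I.elig c → I.Strict c a' b → rsum x a' = 1

/-- Reachable columns: there is an integral shift vector whose row-sum vector is the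
indicator of a single hungry agent and whose column-sum vector is the indicator of c,
decreasing only on the support of x and increasing only on support-or-safe entries. -/
def Tc (I : AllocInstance A C) (x : A → C → ℝ) (c : C) : Prop :=
  ∃ (σ : A → C → ℤ) (a0 : A), rsum x a0 < 1 ∧
    (∀ a c', σ a c' < 0 → 0 < x a c') ∧
    (∀ a c', 0 < σ a c' → 0 < x a c' ∨ Safe I x a c') ∧
    (∀ a, (∑ c', σ a c') = if a = a0 then 1 else 0) ∧
    (∀ c', (∑ a, σ a c') = if c' = c then 1 else 0)

/-- Reachable agents. -/
def Sag (I : AllocInstance A C) (x : A → C → ℝ) (b : A) : Prop :=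
  rsum x b < 1 ∨ ∃ c, Tc I x c ∧ 0 < x b c

/-- fractional entries -/
def fracP (y : A → C → ℝ) (e : A × C) : Prop := ¬ (y e.1 e.2 = 0 ∨ y e.1 e.2 = 1)

/-- measure for the induction -/
noncomputable def msr (I : AllocInstance A C) (y : A → C → ℝ) : ℕ :=
  (univ.filter (fracP y)).card
  + (univ.filter (fun a : A => 0 < rsum y a ∧ rsum y a < 1)).card
  + (univ.filter (fun c : C => 0 < csum y c ∧ csum y c < (I.quota c : ℝ))).card

/-- membership in the decomposition polytope -/
def memP (I : AllocInstance A C) (x y : A → C → ℝ) : Prop :=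
  (∀ a c, 0 ≤ y a c) ∧
  (∀ a c, x a c = 0 → y a c = 0) ∧
  (∀ a, rsum y a ≤ 1) ∧
  (∀ a, rsum x a = 1 → rsum y a = 1) ∧
  (∀ c, csum y c ≤ (I.quota c : ℝ)) ∧
  (∀ c, Tc I x c → csum y c = (I.quota c : ℝ))


section Lemmas

variable {I : AllocInstance A C} {x : A → C → ℝ} {b : A} {c : C}

lemma tc_step (hb : Sag I x b) (hbc : 0 < x b c ∨ Safe I x b c) : Tc I x c := by
  classical
  rcases hb with hhb | ⟨c0, ⟨σ0, a0, ha0, hneg, hpos, hrow, hcol⟩, hbc0⟩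
  · refine ⟨fun a c' => if a = b ∧ c' = c then 1 else 0, b, hhb, ?_, ?_, ?_, ?_⟩
    · intro a c' h; dsimp only at h; split_ifs at h <;> omega
    · intro a c' h
      dsimp only at h
      split_ifs at h with h'
      · obtain ⟨rfl, rfl⟩ := h'; exact hbc
      · omega
    · intro a
      by_cases hab : a = b <;> simp [hab]
    · intro c'
      by_cases hcc : c' = c <;> simp [hcc]
  · refine ⟨fun a c' => σ0 a c' - (if a = b ∧ c' = c0 then 1 else 0)
      + (if a = b ∧ c' = c then 1 else 0), a0, ha0, ?_, ?_, ?_, ?_⟩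
    · intro a c' h
      by_cases h1 : a = b ∧ c' = c0
      · obtain ⟨rfl, rfl⟩ := h1; exact hbc0
      · have : σ0 a c' < 0 := by dsimp only at h; split_ifs at h <;> omega
        exact hneg _ _ this
    · intro a c' h
      by_cases h2 : a = b ∧ c' = c
      · obtain ⟨rfl, rfl⟩ := h2; exact hbc
      · have : 0 < σ0 a c' := by dsimp only at h; split_ifs at h <;> omega
        exact hpos _ _ this
    · intro a
      rw [Finset.sum_add_distrib, Finset.sum_sub_distrib]
      have e1 : (∑ c', if a = b ∧ c' = c0 then (1:ℤ) else 0) = if a = b then 1 else 0 := by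
        by_cases hab : a = b <;> simp [hab]
      have e2 : (∑ c', if a = b ∧ c' = c then (1:ℤ) else 0) = if a = b then 1 else 0 := by
        by_cases hab : a = b <;> simp [hab]
      rw [e1, e2, hrow a]; ring
    · intro c'
      rw [Finset.sum_add_distrib, Finset.sum_sub_distrib]
      have e1 : (∑ a, if a = b ∧ c' = c0 then (1:ℤ) else 0) = if c' = c0 then 1 else 0 := by
        by_cases hcc : c' = c0 <;> simp [hcc]
      have e2 : (∑ a, if a = b ∧ c' = c then (1:ℤ) else 0) = if c' = c then 1 else 0 := by
        by_cases hcc : c' = c <;> simp [hcc]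
      rw [e1, e2, hcol c']
      split_ifs <;> omega

lemma tc_full (hval : I.Valid x) (hc : Tc I x c) : csum x c = (I.quota c : ℝ) := by
  classical
  by_contra hnec
  have hlt : csum x c < (I.quota c : ℝ) := lt_of_le_of_ne (hval.1.2.2.1 c) hnec
  obtain ⟨σ, a0, ha0, hneg, hpos, hrow, hcol⟩ := hc
  set M : Finset ℝ := insert (1 - rsum x a0) (insert ((I.quota c : ℝ) - csum x c)
      ((univ.filter (fun e : A × C => σ e.1 e.2 < 0)).image (fun e => x e.1 e.2))) with hM
  have hMne : M.Nonempty := ⟨_, mem_insert_self _ _⟩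
  set m := M.min' hMne with hm
  have hmpos : 0 < m := by
    rw [hm, Finset.lt_min'_iff]
    intro y hy
    rw [hM] at hy
    rcases Finset.mem_insert.1 hy with rfl | hy
    · linarith
    rcases Finset.mem_insert.1 hy with rfl | hy
    · linarith
    obtain ⟨e, he, rfl⟩ := Finset.mem_image.1 hy
    exact hneg _ _ (Finset.mem_filter.1 he).2
  have hmle : ∀ y ∈ M, m ≤ y := fun y hy => Finset.min'_le _ _ hy
  set B : ℝ := 1 + ∑ a, ∑ c', |(σ a c' : ℝ)| with hB
  have hB1 : 1 ≤ B := by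
    have : (0:ℝ) ≤ ∑ a, ∑ c', |(σ a c' : ℝ)| :=
      Finset.sum_nonneg fun _ _ => Finset.sum_nonneg fun _ _ => abs_nonneg _
    linarith
  have hBpos : 0 < B := by linarith
  have habs : ∀ a c', |(σ a c' : ℝ)| ≤ B := by
    intro a c'
    have h1 : |(σ a c' : ℝ)| ≤ ∑ c'', |(σ a c'' : ℝ)| :=
      Finset.single_le_sum (fun i _ => abs_nonneg ((σ a i : ℝ))) (mem_univ c')
    have h2 : (∑ c'', |(σ a c'' : ℝ)|) ≤ ∑ a', ∑ c'', |(σ a' c'' : ℝ)| :=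
      Finset.single_le_sum (f := fun a' => ∑ c'', |(σ a' c'' : ℝ)|)
        (fun i _ => Finset.sum_nonneg fun _ _ => abs_nonneg _) (mem_univ a)
    linarith
  set t : ℝ := m / B with ht
  have htpos : 0 < t := div_pos hmpos hBpos
  have htm : t ≤ m := by
    rw [ht]
    exact div_le_self (le_of_lt hmpos) hB1
  have hbound : ∀ a c', t * |(σ a c' : ℝ)| ≤ m := by
    intro a c'
    calc t * |(σ a c' : ℝ)| ≤ t * B := by
          exact mul_le_mul_of_nonneg_left (habs a c') (le_of_lt htpos)
      _ = m := by rw [ht]; exact div_mul_cancel₀ m (ne_of_gt hBpos)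
  set w : A → C → ℝ := fun a c' => x a c' + t * (σ a c' : ℝ) with hw
  have hwrow : ∀ a, (∑ c', w a c') = (∑ c', x a c') + t * (if a = a0 then 1 else 0) := by
    intro a
    have h1 : (∑ c', w a c') = (∑ c', x a c') + t * ((∑ c', σ a c' : ℤ) : ℝ) := by
      simp only [hw, Finset.sum_add_distrib, ← Finset.mul_sum]
      push_cast
      ring
    rw [h1, hrow a]
    split_ifs <;> simp
  have hwcol : ∀ c', (∑ a, w a c') = (∑ a, x a c') + t * (if c' = c then 1 else 0) := by
    intro c'
    have h1 : (∑ a, w a c') = (∑ a, x a c') + t * ((∑ a, σ a c' : ℤ) : ℝ) := by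
      simp only [hw, Finset.sum_add_distrib, ← Finset.mul_sum]
      push_cast
      ring
    rw [h1, hcol c']
    split_ifs <;> simp
  have hwfeas : I.Feasible w := by
    refine ⟨?_, ?_, ?_, ?_⟩
    · intro a c'
      rcases le_or_gt 0 (σ a c') with h | h
      · have : (0:ℝ) ≤ (σ a c' : ℝ) := by exact_mod_cast h
        have := hval.1.1 a c'
        simp only [hw]
        nlinarith
      · have hxm : m ≤ x a c' := by
          apply hmle
          rw [hM]
          refine Finset.mem_insert_of_mem (Finset.mem_insert_of_mem ?_)
          exact Finset.mem_image.2 ⟨(a, c'), Finset.mem_filter.2 ⟨mem_univ _, h⟩, rfl⟩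
        have habs' : t * |(σ a c' : ℝ)| ≤ m := hbound a c'
        have : |(σ a c' : ℝ)| = -(σ a c' : ℝ) := by
          rw [abs_of_neg]; exact_mod_cast h
        rw [this] at habs'
        simp only [hw]
        nlinarith
    · intro a c' helig
      have hx0 : x a c' = 0 := hval.1.2.1 a c' helig
      have hσ0 : σ a c' = 0 := by
        rcases lt_trichotomy (σ a c') 0 with h | h | h
        · exact absurd (hneg _ _ h) (by rw [hx0]; exact lt_irrefl 0)
        · exact h
        · rcases hpos _ _ h with hx | hs
          · exact absurd hx (by rw [hx0]; exact lt_irrefl 0)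
          · exact absurd hs.1 helig
      simp [hw, hx0, hσ0]
    · intro c'
      rw [hwcol c']
      split_ifs with h
      · subst h
        have hq : m ≤ (I.quota c' : ℝ) - csum x c' := by
          apply hmle; rw [hM]
          exact Finset.mem_insert_of_mem (Finset.mem_insert_self _ _)
        simp only [csum] at hq
        linarith
      · have := hval.1.2.2.1 c'
        linarith
    · intro a
      rw [hwrow a]
      split_ifs with h
      · subst h
        have hq : m ≤ 1 - rsum x a := by
          apply hmle; rw [hM]; exact Finset.mem_insert_self _ _
        simp only [rsum] at hq
        linarith
      · have := hval.1.2.2.2 a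
        linarith
  have hwpr : I.PR w := by
    intro c'' a ha a' ha' hstrict hposw
    have key : rsum x a' = 1 := by
      rcases lt_or_ge 0 (x a c'') with hx | hx
      · exact hval.2.1 c'' a ha a' ha' hstrict hx
      · have hx0 : x a c'' = 0 := le_antisymm (by linarith [hval.1.1 a c'']) (hval.1.1 a c'')
        have hσpos : 0 < σ a c'' := by
          rcases lt_trichotomy (σ a c'') 0 with h | h | h
          · exact absurd (hneg _ _ h) (by rw [hx0]; exact lt_irrefl 0)
          · exfalso; simp only [hw, hx0, h] at hposw; simp at hposw
          · exact h
        rcases hpos _ _ hσpos with hxx | hs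
        · exact absurd hxx (by rw [hx0]; exact lt_irrefl 0)
        · exact hs.2 a' ha' hstrict
    have hne : a' ≠ a0 := by
      intro h; rw [h] at key; rw [key] at ha0; exact lt_irrefl 1 ha0
    have h2 := hwrow a'
    rw [if_neg hne] at h2
    simp only [rsum] at key
    rw [h2, key]
    ring
  apply hval.2.2
  refine ⟨w, hwfeas, hwpr, ?_, ⟨a0, ?_⟩⟩
  · intro a
    rw [hwrow a]
    split_ifs <;> nlinarith
  · refine lt_of_lt_of_le (lt_add_of_pos_right _ ?_) (le_of_eq (hwrow a0).symm)
    rw [if_pos rfl]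
    nlinarith

lemma m5 (hpre : I.TotalPreorder) (hval : I.Valid x) (z : A → C → ℝ)
    (hzf : I.Feasible z)
    (hzF : ∀ a, rsum x a = 1 → rsum z a = 1) :
    (∑ a, ∑ c', z a c') ≤ ∑ a, ∑ c', x a c' := by
  classical
  set Ss : Finset A := univ.filter (Sag I x) with hSs
  set Ts : Finset C := univ.filter (Tc I x) with hTs
  have hTmem : ∀ d, d ∈ Ts ↔ Tc I x d := by
    intro d; rw [hTs, mem_filter]; simp
  have hSmem : ∀ b', b' ∈ Ss ↔ Sag I x b' := by
    intro b'; rw [hSs, mem_filter]; simp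
  have hzoff : ∀ b' ∈ Ss, ∀ d, d ∉ Ts → z b' d = 0 := by
    intro b' hb d hd
    by_contra hne
    have hzpos : 0 < z b' d := lt_of_le_of_ne (hzf.1 b' d) (Ne.symm hne)
    have helig : b' ∈ I.elig d := by
      by_contra he; exact hne (hzf.2.1 b' d he)
    have hnotsafe : ¬ Safe I x b' d := fun hs =>
      hd ((hTmem d).2 (tc_step ((hSmem b').1 hb) (Or.inr hs)))
    have hex : ∃ h₀, h₀ ∈ I.elig d ∧ rsum x h₀ < 1 := by
      rw [Safe] at hnotsafe
      push_neg at hnotsafe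
      obtain ⟨a', ha'1, _, ha'3⟩ := hnotsafe helig
      exact ⟨a', ha'1, lt_of_le_of_ne (hval.1.2.2.2 a') ha'3⟩
    set r : A → A → Prop := fun p q' => p ∈ I.elig d ∧ q' ∈ I.elig d ∧ I.Strict d p q' with hr
    haveI : IsTrans A r := by
      constructor
      intro p q' s ⟨hp, hq, hpq⟩ ⟨_, hs, hqs⟩
      refine ⟨hp, hs, ⟨hpre.2.1 d p hp q' hq s hs hpq.1 hqs.1, ?_⟩⟩
      intro hsp
      exact hqs.2 (hpre.2.1 d s hs p hp q' hq hsp hpq.1)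
    haveI : IsIrrefl A r := by
      constructor
      intro p ⟨_, _, hps⟩
      exact hps.2 hps.1
    have hwf : WellFounded r := Finite.wellFounded_of_trans_of_irrefl r
    obtain ⟨mm, hm, hmin⟩ := hwf.has_min {h₀ | h₀ ∈ I.elig d ∧ rsum x h₀ < 1}
      ⟨hex.choose, hex.choose_spec⟩
    have hsafe : Safe I x mm d := by
      refine ⟨hm.1, ?_⟩
      intro a' ha' hstr
      by_contra hne1
      have hlt : rsum x a' < 1 := lt_of_le_of_ne (hval.1.2.2.2 a') hne1
      exact hmin a' ⟨ha', hlt⟩ ⟨ha', hm.1, hstr⟩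
    exact hd ((hTmem d).2 (tc_step (Or.inl hm.2) (Or.inr hsafe)))
  have hxoff1 : ∀ b' ∈ Ss, ∀ d, d ∉ Ts → x b' d = 0 := by
    intro b' hb d hd
    by_contra hne
    have hx : 0 < x b' d := lt_of_le_of_ne (hval.1.1 b' d) (Ne.symm hne)
    exact hd ((hTmem d).2 (tc_step ((hSmem b').1 hb) (Or.inl hx)))
  have hxoff2 : ∀ b', b' ∉ Ss → ∀ d ∈ Ts, x b' d = 0 := by
    intro b' hb d hd
    by_contra hne
    have hx : 0 < x b' d := lt_of_le_of_ne (hval.1.1 b' d) (Ne.symm hne)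
    exact hb ((hSmem b').2 (Or.inr ⟨d, (hTmem d).1 hd, hx⟩))
  have key : (∑ b' ∈ Ss, ∑ d, z b' d) ≤ ∑ b' ∈ Ss, ∑ d, x b' d := by
    have e1 : (∑ b' ∈ Ss, ∑ d, z b' d) = ∑ b' ∈ Ss, ∑ d ∈ Ts, z b' d := by
      refine sum_congr rfl fun b' hb => ?_
      exact (Finset.sum_subset (subset_univ Ts) fun d _ hd => hzoff b' hb d hd).symm
    have e2 : (∑ b' ∈ Ss, ∑ d ∈ Ts, z b' d) = ∑ d ∈ Ts, ∑ b' ∈ Ss, z b' d :=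
      Finset.sum_comm
    have e3 : (∑ d ∈ Ts, ∑ b' ∈ Ss, z b' d) ≤ ∑ d ∈ Ts, (I.quota d : ℝ) := by
      refine sum_le_sum fun d _ => ?_
      calc (∑ b' ∈ Ss, z b' d) ≤ ∑ b', z b' d :=
            Finset.sum_le_sum_of_subset_of_nonneg (subset_univ _)
              (fun b' _ _ => hzf.1 b' d)
        _ ≤ (I.quota d : ℝ) := hzf.2.2.1 d
    have e4 : (∑ d ∈ Ts, (I.quota d : ℝ)) = ∑ d ∈ Ts, ∑ b', x b' d := by
      refine sum_congr rfl fun d hd => ?_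
      exact (tc_full hval ((hTmem d).1 hd)).symm
    have e5 : (∑ d ∈ Ts, ∑ b', x b' d) = ∑ d ∈ Ts, ∑ b' ∈ Ss, x b' d := by
      refine sum_congr rfl fun d hd => ?_
      exact (Finset.sum_subset (subset_univ Ss) fun b' _ hb => hxoff2 b' hb d hd).symm
    have e6 : (∑ d ∈ Ts, ∑ b' ∈ Ss, x b' d) = ∑ b' ∈ Ss, ∑ d ∈ Ts, x b' d :=
      Finset.sum_comm
    have e7 : (∑ b' ∈ Ss, ∑ d ∈ Ts, x b' d) = ∑ b' ∈ Ss, ∑ d, x b' d := by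
      refine sum_congr rfl fun b' hb => ?_
      exact Finset.sum_subset (subset_univ Ts) fun d _ hd => hxoff1 b' hb d hd
    linarith [e3]
  have comp : (∑ b' ∈ univ.filter (fun b' => ¬ Sag I x b'), ∑ d, z b' d)
      = ∑ b' ∈ univ.filter (fun b' => ¬ Sag I x b'), ∑ d, x b' d := by
    refine sum_congr rfl fun b' hb => ?_
    have hnot : ¬ Sag I x b' := (mem_filter.1 hb).2
    have hx1 : rsum x b' = 1 := by
      rcases lt_or_ge (rsum x b') 1 with h | h
      · exact absurd (Or.inl h) hnot
      · exact le_antisymm (hval.1.2.2.2 b') h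
    have := hzF b' hx1
    simp only [rsum] at this hx1
    rw [this, hx1]
  have split_z := Finset.sum_filter_add_sum_filter_not univ (Sag I x) (fun b' => ∑ d, z b' d)
  have split_x := Finset.sum_filter_add_sum_filter_not univ (Sag I x) (fun b' => ∑ d, x b' d)
  rw [hSs] at key
  linarith [split_z, split_x, key, comp]

lemma P_V (hval : I.Valid x) {y : A → C → ℝ} (hy : memP I x y) :
    (∑ a, ∑ c', y a c') = ∑ a, ∑ c', x a c' := by
  classical
  set Ss : Finset A := univ.filter (Sag I x) with hSs
  set Ts : Finset C := univ.filter (Tc I x) with hTs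
  have hTmem : ∀ d, d ∈ Ts ↔ Tc I x d := by
    intro d; rw [hTs, mem_filter]; simp
  have hSmem : ∀ b', b' ∈ Ss ↔ Sag I x b' := by
    intro b'; rw [hSs, mem_filter]; simp
  have hxoff1 : ∀ b' ∈ Ss, ∀ d, d ∉ Ts → x b' d = 0 := by
    intro b' hb d hd
    by_contra hne
    have hx : 0 < x b' d := lt_of_le_of_ne (hval.1.1 b' d) (Ne.symm hne)
    exact hd ((hTmem d).2 (tc_step ((hSmem b').1 hb) (Or.inl hx)))
  have hxoff2 : ∀ b', b' ∉ Ss → ∀ d ∈ Ts, x b' d = 0 := by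
    intro b' hb d hd
    by_contra hne
    have hx : 0 < x b' d := lt_of_le_of_ne (hval.1.1 b' d) (Ne.symm hne)
    exact hb ((hSmem b').2 (Or.inr ⟨d, (hTmem d).1 hd, hx⟩))
  have hyoff1 : ∀ b' ∈ Ss, ∀ d, d ∉ Ts → y b' d = 0 := by
    intro b' hb d hd
    by_contra hne
    have hxne : x b' d ≠ 0 := fun h0 => hne (hy.2.1 b' d h0)
    exact hxne (hxoff1 b' hb d hd)
  have hyoff2 : ∀ b', b' ∉ Ss → ∀ d ∈ Ts, y b' d = 0 := by
    intro b' hb d hd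
    exact hy.2.1 b' d (hxoff2 b' hb d hd)
  have chain : ∀ (u : A → C → ℝ), (∀ b' ∈ Ss, ∀ d, d ∉ Ts → u b' d = 0) →
      (∀ b', b' ∉ Ss → ∀ d ∈ Ts, u b' d = 0) → (∀ d ∈ Ts, (∑ b', u b' d) = (I.quota d : ℝ)) →
      (∑ b' ∈ Ss, ∑ d, u b' d) = ∑ d ∈ Ts, (I.quota d : ℝ) := by
    intro u h1 h2 h3
    have e1 : (∑ b' ∈ Ss, ∑ d, u b' d) = ∑ b' ∈ Ss, ∑ d ∈ Ts, u b' d := by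
      refine sum_congr rfl fun b' hb => ?_
      exact (Finset.sum_subset (subset_univ Ts) fun d _ hd => h1 b' hb d hd).symm
    have e2 : (∑ b' ∈ Ss, ∑ d ∈ Ts, u b' d) = ∑ d ∈ Ts, ∑ b' ∈ Ss, u b' d :=
      Finset.sum_comm
    have e5 : (∑ d ∈ Ts, ∑ b' ∈ Ss, u b' d) = ∑ d ∈ Ts, ∑ b', u b' d := by
      refine sum_congr rfl fun d hd => ?_
      exact Finset.sum_subset (subset_univ Ss) fun b' _ hb => h2 b' hb d hd
    rw [e1, e2, e5]
    exact sum_congr rfl h3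
  have cy := chain y hyoff1 hyoff2 (fun d hd => hy.2.2.2.2.2 d ((hTmem d).1 hd))
  have cx := chain x hxoff1 hxoff2 (fun d hd => tc_full hval ((hTmem d).1 hd))
  have comp : (∑ b' ∈ univ.filter (fun b' => ¬ Sag I x b'), ∑ d, y b' d)
      = ∑ b' ∈ univ.filter (fun b' => ¬ Sag I x b'), ∑ d, x b' d := by
    refine sum_congr rfl fun b' hb => ?_
    have hnot : ¬ Sag I x b' := (mem_filter.1 hb).2
    have hx1 : rsum x b' = 1 := by
      rcases lt_or_ge (rsum x b') 1 with h | h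
      · exact absurd (Or.inl h) hnot
      · exact le_antisymm (hval.1.2.2.2 b') h
    have hy1 := hy.2.2.2.1 b' hx1
    simp only [rsum] at hy1 hx1
    rw [hy1, hx1]
  have split_y := Finset.sum_filter_add_sum_filter_not univ (Sag I x) (fun b' => ∑ d, y b' d)
  have split_x := Finset.sum_filter_add_sum_filter_not univ (Sag I x) (fun b' => ∑ d, x b' d)
  rw [hSs] at cy cx
  linarith [split_y, split_x, cy, cx, comp]

lemma P_valid (hpre : I.TotalPreorder) (hval : I.Valid x) {y : A → C → ℝ}
    (hy : memP I x y) : I.Valid y := by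
  classical
  refine ⟨⟨hy.1, ?_, hy.2.2.2.2.1, hy.2.2.1⟩, ?_, ?_⟩
  · intro a c' helig
    exact hy.2.1 a c' (hval.1.2.1 a c' helig)
  · intro c' a ha a' ha' hstr hposy
    have hx : 0 < x a c' := by
      rcases (hval.1.1 a c').eq_or_lt with h | h
      · exfalso
        rw [hy.2.1 a c' h.symm] at hposy
        exact lt_irrefl 0 hposy
      · exact h
    exact hy.2.2.2.1 a' (hval.2.1 c' a ha a' ha' hstr hx)
  · rintro ⟨z, hzf, hzpr, hge, ⟨aa, hstrict⟩⟩
    have hzF : ∀ a, rsum x a = 1 → rsum z a = 1 := by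
      intro a h
      have h1 : rsum y a = 1 := hy.2.2.2.1 a h
      refine le_antisymm (hzf.2.2.2 a) ?_
      have h2 := hge a
      simp only [rsum] at h1 ⊢
      linarith
    have hm5 := m5 hpre hval z hzf hzF
    have hPV := P_V hval hy
    have hlt : (∑ a, ∑ c', y a c') < ∑ a, ∑ c', z a c' :=
      Finset.sum_lt_sum (fun a _ => hge a) ⟨aa, mem_univ _, hstrict⟩
    linarith

lemma move (hy : memP I x y) (σ : A → C → ℝ)
    (hσne : σ ≠ 0) (hσsupp : ∀ a c', σ a c' ≠ 0 → fracP y (a, c'))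
    (hσr : ∀ a, rsum y a = 1 → rsum σ a = 0)
    (hσc : ∀ c', csum y c' = (I.quota c' : ℝ) → csum σ c' = 0) :
    ∃ ε : ℝ, 0 < ε ∧ memP I x (fun a c => y a c + ε * σ a c) ∧
      msr I (fun a c => y a c + ε * σ a c) < msr I y := by
  classical
  have hyfrac_pos : ∀ a c', fracP y (a, c') → 0 < y a c' := by
    intro a c' h
    rcases (hy.1 a c').eq_or_lt with h0 | h0
    · exact absurd (Or.inl h0.symm) h
    · exact h0
  have hentry_le_row : ∀ a c', y a c' ≤ rsum y a :=
    fun a c' => Finset.single_le_sum (fun c'' _ => hy.1 a c'') (mem_univ c')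
  have hentry_le_col : ∀ a c', y a c' ≤ csum y c' :=
    fun a c' => Finset.single_le_sum (fun a' _ => hy.1 a' c') (mem_univ a)
  have hrow0 : ∀ a, rsum y a = 0 → rsum σ a = 0 := by
    intro a h
    refine Finset.sum_eq_zero fun c' _ => ?_
    by_contra hne
    have hfr := hyfrac_pos a c' (hσsupp a c' hne)
    have hle := hentry_le_row a c'
    linarith
  have hcol0 : ∀ c', csum y c' = 0 → csum σ c' = 0 := by
    intro c' h
    refine Finset.sum_eq_zero fun a _ => ?_
    by_contra hne
    have hfr := hyfrac_pos a c' (hσsupp a c' hne)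
    have hle := hentry_le_col a c'
    linarith
  have hrowne : ∀ a, rsum σ a ≠ 0 → 0 < rsum y a ∧ rsum y a < 1 := by
    intro a hne
    constructor
    · rcases (Finset.sum_nonneg fun c' _ => hy.1 a c').eq_or_lt with h0 | h0
      · exact absurd (hrow0 a h0.symm) hne
      · exact h0
    · rcases (hy.2.2.1 a).lt_or_eq with h1 | h1
      · exact h1
      · exact absurd (hσr a h1) hne
  have hcolne : ∀ c', csum σ c' ≠ 0 → 0 < csum y c' ∧ csum y c' < (I.quota c' : ℝ) := by
    intro c' hne
    constructor
    · rcases (Finset.sum_nonneg fun a _ => hy.1 a c').eq_or_lt with h0 | h0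
      · exact absurd (hcol0 c' h0.symm) hne
      · exact h0
    · rcases (hy.2.2.2.2.1 c').lt_or_eq with h1 | h1
      · exact h1
      · exact absurd (hσc c' h1) hne
  set Nf : Finset (A × C) := univ.filter (fun e => σ e.1 e.2 < 0) with hNf
  set Rf : Finset A := univ.filter (fun a => 0 < rsum σ a) with hRf
  set Cf : Finset C := univ.filter (fun c' => 0 < csum σ c') with hCf
  set cand : Finset ℝ := (Nf.image (fun e => y e.1 e.2 / (- σ e.1 e.2))
      ∪ Rf.image (fun a => (1 - rsum y a) / rsum σ a))
      ∪ Cf.image (fun c' => ((I.quota c' : ℝ) - csum y c') / csum σ c') with hcand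
  have hcne : cand.Nonempty := by
    by_cases hN : Nf.Nonempty
    · obtain ⟨e, he⟩ := hN
      exact ⟨_, Finset.mem_union_left _ (Finset.mem_union_left _ (mem_image_of_mem _ he))⟩
    · have hpos : ∀ a c', 0 ≤ σ a c' := by
        intro a c'
        by_contra h
        push_neg at h
        exact hN ⟨(a, c'), mem_filter.2 ⟨mem_univ _, h⟩⟩
      have hex : ∃ a c', σ a c' ≠ 0 := by
        by_contra h
        push_neg at h
        exact hσne (funext fun a => funext fun c' => h a c')
      obtain ⟨a, c', hne'⟩ := hex
      have hrow : 0 < rsum σ a := by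
        have h1 : 0 < σ a c' := lt_of_le_of_ne (hpos a c') (Ne.symm hne')
        have h2 : σ a c' ≤ rsum σ a :=
          Finset.single_le_sum (fun c'' _ => hpos a c'') (mem_univ c')
        linarith
      refine ⟨_, Finset.mem_union_left _ (Finset.mem_union_right _
        (mem_image_of_mem _ (mem_filter.2 ⟨mem_univ _, hrow⟩)))⟩
  set ε := cand.min' hcne with hε
  have hεmem : ε ∈ cand := by rw [hε]; exact cand.min'_mem hcne
  have hεle : ∀ r ∈ cand, ε ≤ r := fun r hr => Finset.min'_le _ _ hr
  have hεpos : 0 < ε := by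
    rw [hε, Finset.lt_min'_iff]
    intro r hr
    rw [hcand] at hr
    rcases Finset.mem_union.1 hr with hr' | hr'
    · rcases Finset.mem_union.1 hr' with hr'' | hr''
      · obtain ⟨e, he, rfl⟩ := Finset.mem_image.1 hr''
        have hσn : σ e.1 e.2 < 0 := (mem_filter.1 he).2
        have hyp : 0 < y e.1 e.2 := hyfrac_pos e.1 e.2 (hσsupp e.1 e.2 (ne_of_lt hσn))
        exact div_pos hyp (by linarith)
      · obtain ⟨a, ha, rfl⟩ := Finset.mem_image.1 hr''
        have hσp : 0 < rsum σ a := (mem_filter.1 ha).2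
        have := (hrowne a (ne_of_gt hσp)).2
        exact div_pos (by linarith) hσp
    · obtain ⟨c', hc', rfl⟩ := Finset.mem_image.1 hr'
      have hσp : 0 < csum σ c' := (mem_filter.1 hc').2
      have := (hcolne c' (ne_of_gt hσp)).2
      exact div_pos (by linarith) hσp
  have hstep : ∀ a c', σ a c' < 0 → ε * (- σ a c') ≤ y a c' := by
    intro a c' h
    have hmem : y a c' / (- σ a c') ∈ cand := by
      rw [hcand]
      refine Finset.mem_union_left _ (Finset.mem_union_left _ ?_)
      exact Finset.mem_image.2 ⟨(a, c'), mem_filter.2 ⟨mem_univ _, h⟩, rfl⟩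
    have hle := hεle _ hmem
    rw [le_div_iff₀ (by linarith : (0:ℝ) < - σ a c')] at hle
    linarith
  have hsteprow : ∀ a, 0 < rsum σ a → ε * rsum σ a ≤ 1 - rsum y a := by
    intro a h
    have hmem : (1 - rsum y a) / rsum σ a ∈ cand := by
      rw [hcand]
      refine Finset.mem_union_left _ (Finset.mem_union_right _ ?_)
      exact Finset.mem_image.2 ⟨a, mem_filter.2 ⟨mem_univ _, h⟩, rfl⟩
    have hle := hεle _ hmem
    rw [le_div_iff₀ h] at hle
    linarith
  have hstepcol : ∀ c', 0 < csum σ c' → ε * csum σ c' ≤ (I.quota c' : ℝ) - csum y c' := by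
    intro c' h
    have hmem : ((I.quota c' : ℝ) - csum y c') / csum σ c' ∈ cand := by
      rw [hcand]
      refine Finset.mem_union_right _ ?_
      exact Finset.mem_image.2 ⟨c', mem_filter.2 ⟨mem_univ _, h⟩, rfl⟩
    have hle := hεle _ hmem
    rw [le_div_iff₀ h] at hle
    linarith
  set y' : A → C → ℝ := fun a c => y a c + ε * σ a c with hy'
  have hy'row : ∀ a, rsum y' a = rsum y a + ε * rsum σ a := by
    intro a
    simp only [hy', rsum]
    rw [Finset.sum_add_distrib, ← Finset.mul_sum]
  have hy'col : ∀ c', csum y' c' = csum y c' + ε * csum σ c' := by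
    intro c'
    simp only [hy', csum]
    rw [Finset.sum_add_distrib, ← Finset.mul_sum]
  have hy'0 : ∀ a c', 0 ≤ y' a c' := by
    intro a c'
    rcases le_or_gt 0 (σ a c') with h | h
    · have := hy.1 a c'
      simp only [hy']
      nlinarith
    · have := hstep a c' h
      simp only [hy']
      nlinarith
  have hy'memP : memP I x y' := by
    refine ⟨hy'0, ?_, ?_, ?_, ?_, ?_⟩
    · intro a c' hx0
      have hy0' : y a c' = 0 := hy.2.1 a c' hx0
      have hσ0 : σ a c' = 0 := by
        by_contra hne
        exact (hσsupp a c' hne) (Or.inl hy0')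
      simp [hy', hy0', hσ0]
    · intro a
      rw [hy'row a]
      rcases le_or_gt (rsum σ a) 0 with h | h
      · have h1 := hy.2.2.1 a
        nlinarith
      · have := hsteprow a h
        linarith
    · intro a hx1
      have h1 : rsum y a = 1 := hy.2.2.2.1 a hx1
      rw [hy'row a, hσr a h1, h1]
      ring
    · intro c'
      rw [hy'col c']
      rcases le_or_gt (csum σ c') 0 with h | h
      · have h1 := hy.2.2.2.2.1 c'
        nlinarith
      · have := hstepcol c' h
        linarith
    · intro c' htc
      have h1 : csum y c' = (I.quota c' : ℝ) := hy.2.2.2.2.2 c' htc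
      rw [hy'col c', hσc c' h1, h1]
      ring
  -- subset facts for the measure
  have hfracsub : ∀ e : A × C, fracP y' e → fracP y e := by
    intro e h
    by_contra hnot
    have hσ0 : σ e.1 e.2 = 0 := by
      by_contra hs
      exact hnot (hσsupp e.1 e.2 hs)
    have : y' e.1 e.2 = y e.1 e.2 := by simp [hy', hσ0]
    rw [fracP, this] at h
    exact h (not_not.1 hnot)
  have hrowsub : ∀ a, (0 < rsum y' a ∧ rsum y' a < 1) → (0 < rsum y a ∧ rsum y a < 1) := by
    intro a ⟨h1, h2⟩
    by_cases hz : rsum σ a = 0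
    · rw [hy'row a, hz, mul_zero, add_zero] at h1 h2
      exact ⟨h1, h2⟩
    · exact hrowne a hz
  have hcolsub : ∀ c', (0 < csum y' c' ∧ csum y' c' < (I.quota c' : ℝ)) →
      (0 < csum y c' ∧ csum y c' < (I.quota c' : ℝ)) := by
    intro c' ⟨h1, h2⟩
    by_cases hz : csum σ c' = 0
    · rw [hy'col c', hz, mul_zero, add_zero] at h1 h2
      exact ⟨h1, h2⟩
    · exact hcolne c' hz
  have hsub1 : univ.filter (fracP y') ⊆ univ.filter (fracP y) := by
    intro e he
    rw [mem_filter] at he ⊢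
    exact ⟨mem_univ _, hfracsub e he.2⟩
  have hsub2 : univ.filter (fun a => 0 < rsum y' a ∧ rsum y' a < 1)
      ⊆ univ.filter (fun a => 0 < rsum y a ∧ rsum y a < 1) := by
    intro a ha
    rw [mem_filter] at ha ⊢
    exact ⟨mem_univ _, hrowsub a ha.2⟩
  have hsub3 : univ.filter (fun c' => 0 < csum y' c' ∧ csum y' c' < (I.quota c' : ℝ))
      ⊆ univ.filter (fun c' => 0 < csum y c' ∧ csum y c' < (I.quota c' : ℝ)) := by
    intro c' hc'
    rw [mem_filter] at hc' ⊢
    exact ⟨mem_univ _, hcolsub c' hc'.2⟩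
  refine ⟨ε, hεpos, hy'memP, ?_⟩
  show msr I y' < msr I y
  have hc2 : (univ.filter (fun a => 0 < rsum y' a ∧ rsum y' a < 1)).card
      ≤ (univ.filter (fun a => 0 < rsum y a ∧ rsum y a < 1)).card := Finset.card_le_card hsub2
  have hc3 : (univ.filter (fun c' => 0 < csum y' c' ∧ csum y' c' < (I.quota c' : ℝ))).card
      ≤ (univ.filter (fun c' => 0 < csum y c' ∧ csum y c' < (I.quota c' : ℝ))).card :=
    Finset.card_le_card hsub3
  have hc1 : (univ.filter (fracP y')).card ≤ (univ.filter (fracP y)).card :=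
    Finset.card_le_card hsub1
  -- one of the three strictly decreases
  have hstrict : ((univ.filter (fracP y')).card < (univ.filter (fracP y)).card)
      ∨ ((univ.filter (fun a => 0 < rsum y' a ∧ rsum y' a < 1)).card
          < (univ.filter (fun a => 0 < rsum y a ∧ rsum y a < 1)).card)
      ∨ ((univ.filter (fun c' => 0 < csum y' c' ∧ csum y' c' < (I.quota c' : ℝ))).card
          < (univ.filter (fun c' => 0 < csum y c' ∧ csum y c' < (I.quota c' : ℝ))).card) := by
    rw [hcand] at hεmem
    rcases Finset.mem_union.1 hεmem with hr' | hr'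
    · rcases Finset.mem_union.1 hr' with hr'' | hr''
      · obtain ⟨e0, he0, heq⟩ := Finset.mem_image.1 hr''
        left
        have hσn : σ e0.1 e0.2 < 0 := (mem_filter.1 he0).2
        have hσne0 : σ e0.1 e0.2 ≠ 0 := ne_of_lt hσn
        have hkill : y' e0.1 e0.2 = 0 := by
          have hnσ : -σ e0.1 e0.2 ≠ 0 := neg_ne_zero.2 hσne0
          simp only [hy']
          rw [← heq]
          field_simp
          try ring
        refine Finset.card_lt_card ⟨hsub1, fun hsup => ?_⟩
        have he0y : e0 ∈ univ.filter (fracP y) :=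
          mem_filter.2 ⟨mem_univ _, hσsupp e0.1 e0.2 hσne0⟩
        have := hsup he0y
        rw [mem_filter] at this
        exact this.2 (Or.inl hkill)
      · obtain ⟨a0, ha0, heq⟩ := Finset.mem_image.1 hr''
        right; left
        have hσp : 0 < rsum σ a0 := (mem_filter.1 ha0).2
        have hone : rsum y' a0 = 1 := by
          have hnσ : rsum σ a0 ≠ 0 := ne_of_gt hσp
          rw [hy'row a0, ← heq]
          field_simp
          ring
        refine Finset.card_lt_card ⟨hsub2, fun hsup => ?_⟩
        have ha0y : a0 ∈ univ.filter (fun a => 0 < rsum y a ∧ rsum y a < 1) :=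
          mem_filter.2 ⟨mem_univ _, hrowne a0 (ne_of_gt hσp)⟩
        have := hsup ha0y
        rw [mem_filter] at this
        exact absurd hone (by linarith [this.2.2])
    · obtain ⟨c0, hc0, heq⟩ := Finset.mem_image.1 hr'
      right; right
      have hσp : 0 < csum σ c0 := (mem_filter.1 hc0).2
      have hone : csum y' c0 = (I.quota c0 : ℝ) := by
        have hnσ : csum σ c0 ≠ 0 := ne_of_gt hσp
        rw [hy'col c0, ← heq]
        field_simp
        ring
      refine Finset.card_lt_card ⟨hsub3, fun hsup => ?_⟩
      have hc0y : c0 ∈ univ.filter (fun c' => 0 < csum y c' ∧ csum y c' < (I.quota c' : ℝ)) :=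
        mem_filter.2 ⟨mem_univ _, hcolne c0 (ne_of_gt hσp)⟩
      have := hsup hc0y
      rw [mem_filter] at this
      exact absurd hone (by linarith [this.2.2])
  unfold msr
  rcases hstrict with h | h | h
  · omega
  · omega
  · omega

lemma kernel {y : A → C → ℝ} (q : C → ℕ) (hy0 : ∀ a c, 0 ≤ y a c)
    (hyr : ∀ a, rsum y a ≤ 1) (hyc : ∀ c, csum y c ≤ (q c : ℝ))
    (hne : ∃ e : A × C, fracP y e) :
    ∃ σ : A → C → ℝ, σ ≠ 0 ∧ (∀ a c, σ a c ≠ 0 → fracP y (a, c)) ∧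
      (∀ a, rsum y a = 1 → rsum σ a = 0) ∧
      (∀ c, csum y c = (q c : ℝ) → csum σ c = 0) := by
  classical
  by_contra hcon
  have hD : ∀ σ : A → C → ℝ, (∀ a c, σ a c ≠ 0 → fracP y (a, c)) →
      (∀ a, rsum y a = 1 → rsum σ a = 0) →
      (∀ c, csum y c = (q c : ℝ) → csum σ c = 0) → σ = 0 := by
    intro σ h1 h2 h3
    by_contra hne0
    exact hcon ⟨σ, hne0, h1, h2, h3⟩
  set Efin : Finset (A × C) := univ.filter (fracP y) with hEfin
  have hEmem : ∀ e : A × C, e ∈ Efin ↔ fracP y e := by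
    intro e; rw [hEfin, mem_filter]; simp
  have hEne : Efin.Nonempty := by
    obtain ⟨e, he⟩ := hne; exact ⟨e, (hEmem e).2 he⟩
  -- single-entry bound
  have hentry_le : ∀ a c, y a c ≤ 1 := by
    intro a c
    calc y a c ≤ rsum y a :=
          Finset.single_le_sum (fun c' _ => hy0 a c') (mem_univ c)
      _ ≤ 1 := hyr a
  set TR : Finset A := univ.filter (fun a => rsum y a = 1 ∧ ∃ c', (a, c') ∈ Efin) with hTR
  set TCf : Finset C := univ.filter (fun c => csum y c = (q c : ℝ) ∧ ∃ a, (a, c) ∈ Efin) with hTCf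
  -- degrees
  set dA : A → ℕ := fun a => (univ.filter (fun c' => (a, c') ∈ Efin)).card with hdA
  set dC : C → ℕ := fun c => (univ.filter (fun a => (a, c) ∈ Efin)).card with hdC
  -- integrality of non-fractional entries as 0/1 sums
  have hsum01 : ∀ (a : A) (s : Finset C), (∀ c' ∈ s, ¬ fracP y (a, c')) →
      ∃ n : ℕ, (∑ c' ∈ s, y a c') = (n : ℝ) := by
    intro a s hs
    refine ⟨(s.filter (fun c' => y a c' = 1)).card, ?_⟩
    rw [← Finset.sum_boole]
    refine Finset.sum_congr rfl fun c' hc' => ?_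
    have := hs c' hc'
    rw [fracP] at this
    push_neg at this
    rcases Classical.em (y a c' = 1) with h1 | h1
    · simp [h1]
    · have h0 : y a c' = 0 := by tauto
      simp [h0, h1]
  have hsum01C : ∀ (c : C) (s : Finset A), (∀ a ∈ s, ¬ fracP y (a, c)) →
      ∃ n : ℕ, (∑ a ∈ s, y a c) = (n : ℝ) := by
    intro c s hs
    refine ⟨(s.filter (fun a => y a c = 1)).card, ?_⟩
    rw [← Finset.sum_boole]
    refine Finset.sum_congr rfl fun a ha => ?_
    have := hs a ha
    rw [fracP] at this
    push_neg at this
    rcases Classical.em (y a c = 1) with h1 | h1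
    · simp [h1]
    · have h0 : y a c = 0 := by tauto
      simp [h0, h1]
  have hdegA : ∀ a ∈ TR, 2 ≤ dA a := by
    intro a ha
    rw [hTR, mem_filter] at ha
    obtain ⟨-, hrow1, c0', hc0'⟩ := ha
    by_contra hlt
    push_neg at hlt
    interval_cases h : dA a
    · have : c0' ∈ univ.filter (fun c' => (a, c') ∈ Efin) := by
        rw [mem_filter]; exact ⟨mem_univ _, hc0'⟩
      rw [hdA] at h
      simp only [Finset.card_eq_zero] at h
      rw [h] at this
      exact absurd this (Finset.notMem_empty _)
    · obtain ⟨c0, hc0⟩ := Finset.card_eq_one.1 h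
      have hmemc0 : (a, c0) ∈ Efin := by
        have : c0 ∈ univ.filter (fun c' => (a, c') ∈ Efin) := by rw [hc0]; exact mem_singleton_self _
        exact (mem_filter.1 this).2
      have hrest : ∀ c' ∈ univ.erase c0, ¬ fracP y (a, c') := by
        intro c' hc'
        intro hf
        have : c' ∈ univ.filter (fun c'' => (a, c'') ∈ Efin) := by
          rw [mem_filter]; exact ⟨mem_univ _, (hEmem _).2 hf⟩
        rw [hc0, mem_singleton] at this
        exact (Finset.mem_erase.1 hc').1 this
      obtain ⟨n, hn⟩ := hsum01 a (univ.erase c0) hrest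
      have hsplit : y a c0 + (∑ c' ∈ univ.erase c0, y a c') = rsum y a :=
        Finset.add_sum_erase univ (fun c' => y a c') (mem_univ c0)
      have hv : y a c0 = 1 - (n : ℝ) := by rw [hn] at hsplit; linarith [hrow1, hsplit.symm ▸ hrow1]
      have h0 : 0 ≤ y a c0 := hy0 a c0
      have h1 : y a c0 ≤ 1 := hentry_le a c0
      have hfr : fracP y (a, c0) := (hEmem _).1 hmemc0
      rw [fracP] at hfr
      push_neg at hfr
      have hn1 : n = 0 ∨ n = 1 := by
        have : (n : ℝ) ≤ 1 := by linarith
        have : n ≤ 1 := by exact_mod_cast this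
        omega
      rcases hn1 with rfl | rfl
      · simp at hv; exact hfr.2 hv
      · simp at hv; exact hfr.1 hv
  have hdegC : ∀ c ∈ TCf, 2 ≤ dC c := by
    intro c hc
    rw [hTCf, mem_filter] at hc
    obtain ⟨-, hcol1, a0', ha0'⟩ := hc
    by_contra hlt
    push_neg at hlt
    interval_cases h : dC c
    · have : a0' ∈ univ.filter (fun a => (a, c) ∈ Efin) := by
        rw [mem_filter]; exact ⟨mem_univ _, ha0'⟩
      rw [hdC] at h
      simp only [Finset.card_eq_zero] at h
      rw [h] at this
      exact absurd this (Finset.notMem_empty _)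
    · obtain ⟨a0, ha0⟩ := Finset.card_eq_one.1 h
      have hmema0 : (a0, c) ∈ Efin := by
        have : a0 ∈ univ.filter (fun a => (a, c) ∈ Efin) := by rw [ha0]; exact mem_singleton_self _
        exact (mem_filter.1 this).2
      have hrest : ∀ a ∈ univ.erase a0, ¬ fracP y (a, c) := by
        intro a ha
        intro hf
        have : a ∈ univ.filter (fun a' => (a', c) ∈ Efin) := by
          rw [mem_filter]; exact ⟨mem_univ _, (hEmem _).2 hf⟩
        rw [ha0, mem_singleton] at this
        exact (Finset.mem_erase.1 ha).1 this
      obtain ⟨n, hn⟩ := hsum01C c (univ.erase a0) hrest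
      have hsplit : y a0 c + (∑ a ∈ univ.erase a0, y a c) = csum y c :=
        Finset.add_sum_erase univ (fun a => y a c) (mem_univ a0)
      have hv : y a0 c = (q c : ℝ) - (n : ℝ) := by rw [hn] at hsplit; linarith [hcol1]
      have h0 : 0 ≤ y a0 c := hy0 a0 c
      have h1 : y a0 c ≤ 1 := hentry_le a0 c
      have hfr : fracP y (a0, c) := (hEmem _).1 hmema0
      rw [fracP] at hfr
      push_neg at hfr
      have hqn : (q c : ℤ) - (n : ℤ) = 0 ∨ (q c : ℤ) - (n : ℤ) = 1 := by
        have e0 : (0:ℝ) ≤ ((q c : ℤ) - (n : ℤ) : ℤ) := by push_cast; linarith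
        have e1 : (((q c : ℤ) - (n : ℤ) : ℤ) : ℝ) ≤ 1 := by push_cast; linarith
        have e0' : (0:ℤ) ≤ (q c : ℤ) - (n : ℤ) := by exact_mod_cast e0
        have e1' : (q c : ℤ) - (n : ℤ) ≤ 1 := by exact_mod_cast e1
        omega
      rcases hqn with hz | hz
      · refine hfr.1 ?_
        have : ((q c : ℤ) - (n : ℤ) : ℝ) = 0 := by exact_mod_cast congrArg (Int.cast : ℤ → ℝ) hz
        push_cast at this
        linarith
      · refine absurd ?_ hfr.2
        have : ((q c : ℤ) - (n : ℤ) : ℝ) = 1 := by exact_mod_cast congrArg (Int.cast : ℤ → ℝ) hz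
        push_cast at this
        linarith
  -- the incidence linear map
  set coeff : (↥TR ⊕ ↥TCf) → (A × C) → ℝ := fun v e =>
    Sum.elim (fun a : ↥TR => if e.1 = ↑a then (1:ℝ) else 0)
             (fun c : ↥TCf => if e.2 = ↑c then (1:ℝ) else 0) v with hcoeff
  set L : (↥Efin → ℝ) →ₗ[ℝ] ((↥TR ⊕ ↥TCf) → ℝ) :=
    { toFun := fun f v => ∑ e ∈ Efin.attach, coeff v ↑e * f e
      map_add' := by
        intro f g; funext v
        simp only [Pi.add_apply, mul_add, Finset.sum_add_distrib]
      map_smul' := by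
        intro r f; funext v
        simp only [Pi.smul_apply, smul_eq_mul, RingHom.id_apply, Finset.mul_sum]
        exact Finset.sum_congr rfl fun e _ => by ring } with hL
  have hLval : ∀ (f : ↥Efin → ℝ) v, L f v = ∑ e ∈ Efin.attach, coeff v ↑e * f e :=
    fun f v => rfl
  have hLinj : Function.Injective L := by
    rw [← LinearMap.ker_eq_bot, LinearMap.ker_eq_bot']
    intro f hf
    set σ : A → C → ℝ := fun a c => if h : (a, c) ∈ Efin then f ⟨(a, c), h⟩ else 0 with hσ
    have hfe : ∀ e : ↥Efin, σ (e : A × C).1 (e : A × C).2 = f e := by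
      intro e
      rw [hσ]
      exact dif_pos e.property
    have hσnot : ∀ e : A × C, e ∉ Efin → σ e.1 e.2 = 0 := by
      intro e he
      rw [hσ]
      exact dif_neg he
    have hrowkey : ∀ (a : A) (ha : a ∈ TR), L f (Sum.inl ⟨a, ha⟩) = ∑ c', σ a c' := by
      intro a ha
      rw [hLval]
      calc (∑ e ∈ Efin.attach, coeff (Sum.inl ⟨a, ha⟩) ↑e * f e)
          = ∑ e ∈ Efin.attach, (if (e : A × C).1 = a then σ (e : A × C).1 (e : A × C).2 else 0) := by
            refine Finset.sum_congr rfl fun e _ => ?_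
            rw [hcoeff]
            simp only [Sum.elim_inl]
            split_ifs with h
            · rw [one_mul, hfe e]
            · rw [zero_mul]
        _ = ∑ e ∈ Efin, (if e.1 = a then σ e.1 e.2 else 0) :=
            Finset.sum_attach Efin (fun e => if e.1 = a then σ e.1 e.2 else 0)
        _ = ∑ e ∈ (univ : Finset (A × C)), (if e.1 = a then σ e.1 e.2 else 0) := by
            refine Finset.sum_subset (subset_univ _) fun e _ he => ?_
            rw [hσnot e he]
            simp
        _ = ∑ a', ∑ c', (if a' = a then σ a' c' else 0) := by
            exact Fintype.sum_prod_type (f := fun e : A × C => if e.1 = a then σ e.1 e.2 else 0)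
        _ = ∑ a', (if a' = a then ∑ c', σ a' c' else 0) := by
            refine Finset.sum_congr rfl fun a' _ => ?_
            split_ifs <;> simp
        _ = ∑ c', σ a c' := by
            rw [Finset.sum_ite_eq' univ a (fun a' => ∑ c', σ a' c')]
            simp
    have hcolkey : ∀ (c : C) (hc : c ∈ TCf), L f (Sum.inr ⟨c, hc⟩) = ∑ a', σ a' c := by
      intro c hc
      rw [hLval]
      calc (∑ e ∈ Efin.attach, coeff (Sum.inr ⟨c, hc⟩) ↑e * f e)
          = ∑ e ∈ Efin.attach, (if (e : A × C).2 = c then σ (e : A × C).1 (e : A × C).2 else 0) := by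
            refine Finset.sum_congr rfl fun e _ => ?_
            rw [hcoeff]
            simp only [Sum.elim_inr]
            split_ifs with h
            · rw [one_mul, hfe e]
            · rw [zero_mul]
        _ = ∑ e ∈ Efin, (if e.2 = c then σ e.1 e.2 else 0) :=
            Finset.sum_attach Efin (fun e => if e.2 = c then σ e.1 e.2 else 0)
        _ = ∑ e ∈ (univ : Finset (A × C)), (if e.2 = c then σ e.1 e.2 else 0) := by
            refine Finset.sum_subset (subset_univ _) fun e _ he => ?_
            rw [hσnot e he]
            simp
        _ = ∑ a', ∑ c', (if c' = c then σ a' c' else 0) := by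
            exact Fintype.sum_prod_type (f := fun e : A × C => if e.2 = c then σ e.1 e.2 else 0)
        _ = ∑ a', σ a' c := by
            refine Finset.sum_congr rfl fun a' _ => ?_
            rw [Finset.sum_ite_eq' univ c (fun c' => σ a' c')]
            simp
    have h1 : ∀ a c, σ a c ≠ 0 → fracP y (a, c) := by
      intro a c h
      by_contra hfz
      exact h (hσnot (a, c) (fun hm => hfz ((hEmem _).1 hm)))
    have h2 : ∀ a, rsum y a = 1 → rsum σ a = 0 := by
      intro a ha
      by_cases htouch : ∃ c', (a, c') ∈ Efin
      · have haTR : a ∈ TR := by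
          rw [hTR, mem_filter]; exact ⟨mem_univ _, ha, htouch⟩
        have := hrowkey a haTR
        rw [hf] at this
        simpa [rsum] using this.symm
      · push_neg at htouch
        refine Finset.sum_eq_zero fun c' _ => hσnot (a, c') (htouch c')
    have h3 : ∀ c, csum y c = (q c : ℝ) → csum σ c = 0 := by
      intro c hc
      by_cases htouch : ∃ a, (a, c) ∈ Efin
      · have hcT : c ∈ TCf := by
          rw [hTCf, mem_filter]; exact ⟨mem_univ _, hc, htouch⟩
        have := hcolkey c hcT
        rw [hf] at this
        simpa [csum] using this.symm
      · push_neg at htouch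
        refine Finset.sum_eq_zero fun a _ => hσnot (a, c) (htouch a)
    have hσ0 : σ = 0 := hD σ h1 h2 h3
    funext e
    rw [← hfe e, hσ0]
    rfl
  -- cardinality bound from injectivity
  have hcard1 : Efin.card ≤ TR.card + TCf.card := by
    have hfr := LinearMap.finrank_le_finrank_of_injective hLinj
    rw [Module.finrank_fintype_fun_eq_card, Module.finrank_fintype_fun_eq_card] at hfr
    simpa [Fintype.card_coe, Fintype.card_sum] using hfr
  -- counting: fibers
  have hfibA : ∀ a, ((Efin.filter (fun e => e.1 = a)).card = dA a) := by
    intro a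
    rw [hdA]
    apply Finset.card_bij' (i := fun e (_ : e ∈ Efin.filter (fun e => e.1 = a)) => e.2)
      (j := fun c' (_ : c' ∈ univ.filter (fun c' => (a, c') ∈ Efin)) => (a, c'))
    · intro e he
      rw [mem_filter] at he ⊢
      obtain ⟨he1, he2⟩ := he
      refine ⟨mem_univ _, ?_⟩
      have : (a, e.2) = e := by rw [← he2]
      rw [this]; exact he1
    · intro c' hc'
      rw [mem_filter] at hc' ⊢
      exact ⟨hc'.2, rfl⟩
    · intro e he
      rw [mem_filter] at he
      rw [← he.2]
    · intro c' _
      rfl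
  have hfibC : ∀ c, ((Efin.filter (fun e => e.2 = c)).card = dC c) := by
    intro c
    rw [hdC]
    apply Finset.card_bij' (i := fun e (_ : e ∈ Efin.filter (fun e => e.2 = c)) => e.1)
      (j := fun a (_ : a ∈ univ.filter (fun a => (a, c) ∈ Efin)) => (a, c))
    · intro e he
      rw [mem_filter] at he ⊢
      obtain ⟨he1, he2⟩ := he
      refine ⟨mem_univ _, ?_⟩
      have : (e.1, c) = e := by rw [← he2]
      rw [this]; exact he1
    · intro a ha
      rw [mem_filter] at ha ⊢
      exact ⟨ha.2, rfl⟩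
    · intro e he
      rw [mem_filter] at he
      rw [← he.2]
    · intro a _
      rfl
  have hEsumA : Efin.card = ∑ a, dA a := by
    rw [Finset.card_eq_sum_card_fiberwise (f := fun e : A × C => e.1) (t := univ)
      (fun e _ => mem_univ _)]
    exact Finset.sum_congr rfl fun a _ => hfibA a
  have hEsumC : Efin.card = ∑ c, dC c := by
    rw [Finset.card_eq_sum_card_fiberwise (f := fun e : A × C => e.2) (t := univ)
      (fun e _ => mem_univ _)]
    exact Finset.sum_congr rfl fun c _ => hfibC c
  have h2R : 2 * TR.card ≤ ∑ a ∈ TR, dA a := by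
    calc 2 * TR.card = ∑ _a ∈ TR, 2 := by rw [Finset.sum_const, smul_eq_mul, mul_comm]
      _ ≤ ∑ a ∈ TR, dA a := Finset.sum_le_sum hdegA
  have h2C : 2 * TCf.card ≤ ∑ c ∈ TCf, dC c := by
    calc 2 * TCf.card = ∑ _c ∈ TCf, 2 := by rw [Finset.sum_const, smul_eq_mul, mul_comm]
      _ ≤ ∑ c ∈ TCf, dC c := Finset.sum_le_sum hdegC
  have herow : (∑ a ∈ TR, dA a) ≤ Efin.card := by
    rw [hEsumA]
    exact Finset.sum_le_sum_of_subset (subset_univ _)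
  have hecol : (∑ c ∈ TCf, dC c) ≤ Efin.card := by
    rw [hEsumC]
    exact Finset.sum_le_sum_of_subset (subset_univ _)
  have herowE : (∑ a ∈ TR, dA a) = Efin.card := by omega
  have hecolE : (∑ c ∈ TCf, dC c) = Efin.card := by omega
  -- all edges have tight endpoints
  have hcompA : (∑ a ∈ univ \ TR, dA a) = 0 := by
    have := Finset.sum_sdiff (f := dA) (subset_univ TR)
    omega
  have hcompC : (∑ c ∈ univ \ TCf, dC c) = 0 := by
    have := Finset.sum_sdiff (f := dC) (subset_univ TCf)
    omega
  have htightA : ∀ e : A × C, e ∈ Efin → e.1 ∈ TR := by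
    intro e he
    by_contra hnot
    have h0 : dA e.1 = 0 := by
      have := (Finset.sum_eq_zero_iff.1 hcompA) e.1 (by rw [Finset.mem_sdiff]; exact ⟨mem_univ _, hnot⟩)
      exact this
    have : e.2 ∈ univ.filter (fun c' => (e.1, c') ∈ Efin) := by
      rw [mem_filter]
      exact ⟨mem_univ _, by rw [show (e.1, e.2) = e from rfl]; exact he⟩
    rw [hdA] at h0
    rw [Finset.card_eq_zero.1 h0] at this
    exact absurd this (Finset.notMem_empty _)
  have htightC : ∀ e : A × C, e ∈ Efin → e.2 ∈ TCf := by
    intro e he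
    by_contra hnot
    have h0 : dC e.2 = 0 := by
      have := (Finset.sum_eq_zero_iff.1 hcompC) e.2 (by rw [Finset.mem_sdiff]; exact ⟨mem_univ _, hnot⟩)
      exact this
    have : e.1 ∈ univ.filter (fun a => (a, e.2) ∈ Efin) := by
      rw [mem_filter]
      exact ⟨mem_univ _, by rw [show (e.1, e.2) = e from rfl]; exact he⟩
    rw [hdC] at h0
    rw [Finset.card_eq_zero.1 h0] at this
    exact absurd this (Finset.notMem_empty _)
  -- the orthogonal functional
  set φ : ((↥TR ⊕ ↥TCf) → ℝ) →ₗ[ℝ] ℝ :=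
    (∑ a : ↥TR, LinearMap.proj (Sum.inl a)) - (∑ c : ↥TCf, LinearMap.proj (Sum.inr c)) with hφ
  have hφapp : ∀ g : (↥TR ⊕ ↥TCf) → ℝ,
      φ g = (∑ a : ↥TR, g (Sum.inl a)) - ∑ c : ↥TCf, g (Sum.inr c) := by
    intro g
    rw [hφ]
    simp [LinearMap.sub_apply, LinearMap.sum_apply, LinearMap.proj_apply]
  have hφL : ∀ f, φ (L f) = 0 := by
    intro f
    rw [hφapp]
    have hpart : ∀ v, L f v = ∑ e ∈ Efin.attach, coeff v ↑e * f e := hLval f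
    have hp1 : (∑ a : ↥TR, L f (Sum.inl a)) = ∑ e ∈ Efin.attach, f e := by
      calc (∑ a : ↥TR, L f (Sum.inl a))
          = ∑ a : ↥TR, ∑ e ∈ Efin.attach, coeff (Sum.inl a) ↑e * f e := by
            exact Finset.sum_congr rfl fun a _ => hpart (Sum.inl a)
        _ = ∑ e ∈ Efin.attach, ∑ a : ↥TR, coeff (Sum.inl a) ↑e * f e := Finset.sum_comm
        _ = ∑ e ∈ Efin.attach, f e := by
            refine Finset.sum_congr rfl fun e _ => ?_
            rw [← Finset.sum_mul]
            have hc1 : (∑ a : ↥TR, coeff (Sum.inl a) ↑e) = 1 := by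
              rw [hcoeff]
              simp only [Sum.elim_inl]
              rw [Finset.sum_coe_sort TR (fun a => if (e : A × C).1 = a then (1:ℝ) else 0)]
              rw [Finset.sum_ite_eq TR ((e : A × C).1) (fun _ => (1:ℝ))]
              rw [if_pos (htightA e e.property)]
            rw [hc1, one_mul]
    have hp2 : (∑ c : ↥TCf, L f (Sum.inr c)) = ∑ e ∈ Efin.attach, f e := by
      calc (∑ c : ↥TCf, L f (Sum.inr c))
          = ∑ c : ↥TCf, ∑ e ∈ Efin.attach, coeff (Sum.inr c) ↑e * f e := by
            exact Finset.sum_congr rfl fun c _ => hpart (Sum.inr c)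
        _ = ∑ e ∈ Efin.attach, ∑ c : ↥TCf, coeff (Sum.inr c) ↑e * f e := Finset.sum_comm
        _ = ∑ e ∈ Efin.attach, f e := by
            refine Finset.sum_congr rfl fun e _ => ?_
            rw [← Finset.sum_mul]
            have hc1 : (∑ c : ↥TCf, coeff (Sum.inr c) ↑e) = 1 := by
              rw [hcoeff]
              simp only [Sum.elim_inr]
              rw [Finset.sum_coe_sort TCf (fun c => if (e : A × C).2 = c then (1:ℝ) else 0)]
              rw [Finset.sum_ite_eq TCf ((e : A × C).2) (fun _ => (1:ℝ))]
              rw [if_pos (htightC e e.property)]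
            rw [hc1, one_mul]
    rw [hp1, hp2, sub_self]
  have hφne : φ ≠ 0 := by
    obtain ⟨e0, he0⟩ := hEne
    intro h0
    have happ := hφapp (fun v => Sum.elim (fun _ => (1:ℝ)) (fun _ => 0) v)
    rw [h0] at happ
    simp only [LinearMap.zero_apply, Sum.elim_inl, Sum.elim_inr] at happ
    have hval1 : (∑ _a : ↥TR, (1:ℝ)) = (TR.card : ℝ) := by
      rw [Finset.sum_const, Finset.card_univ, Fintype.card_coe, nsmul_eq_mul, mul_one]
    have hval2 : (∑ _c : ↥TCf, (0:ℝ)) = 0 := Finset.sum_const_zero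
    rw [hval1, hval2, sub_zero] at happ
    have hpos : 0 < TR.card := Finset.card_pos.2 ⟨e0.1, htightA e0 he0⟩
    have hposR : (0:ℝ) < (TR.card : ℝ) := by exact_mod_cast hpos
    rw [← happ] at hposR
    exact lt_irrefl 0 hposR
  have hrange : ∀ f, L f ∈ LinearMap.ker φ := fun f => LinearMap.mem_ker.2 (hφL f)
  set L' : (↥Efin → ℝ) →ₗ[ℝ] (LinearMap.ker φ) := L.codRestrict (LinearMap.ker φ) hrange with hL'
  have hL'inj : Function.Injective L' := by
    rw [hL']
    intro f g hfg
    apply hLinj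
    have := congrArg (Subtype.val) hfg
    simpa [LinearMap.codRestrict] using hfg
  have hfr2 := LinearMap.finrank_le_finrank_of_injective hL'inj
  have hEfinrank : Module.finrank ℝ (↥Efin → ℝ) = Efin.card := by
    rw [Module.finrank_fintype_fun_eq_card, Fintype.card_coe]
  have hk : Module.finrank ℝ ((↥TR ⊕ ↥TCf) → ℝ) = TR.card + TCf.card := by
    rw [Module.finrank_fintype_fun_eq_card]
    simp [Fintype.card_sum, Fintype.card_coe]
  have hrk := LinearMap.finrank_range_add_finrank_ker φ
  have hrange1 : Module.finrank ℝ (LinearMap.range φ) = 1 := by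
    have hle : Module.finrank ℝ (LinearMap.range φ) ≤ 1 := by
      calc Module.finrank ℝ (LinearMap.range φ) ≤ Module.finrank ℝ ℝ :=
            Submodule.finrank_le (LinearMap.range φ)
        _ = 1 := Module.finrank_self ℝ
    have hne0 : Module.finrank ℝ (LinearMap.range φ) ≠ 0 := by
      have hbne : LinearMap.range φ ≠ ⊥ := fun hbot => hφne (LinearMap.range_eq_bot.1 hbot)
      intro h0
      exact hbne (Submodule.finrank_eq_zero.1 h0)
    omega
  rw [hk, hrange1] at hrk
  rw [hEfinrank] at hfr2
  have hEpos : 1 ≤ Efin.card := Finset.card_pos.2 hEne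
  omega

lemma dec_int {y : A → C → ℝ} (hy : memP I x y) (hfr : ¬ ∃ e : A × C, fracP y e) :
    ∃ (k : ℕ) (xs : Fin k → A → C → ℝ) (lam : Fin k → ℝ),
      (∀ i, memP I x (xs i) ∧ I.Integral (xs i)) ∧
      (∀ i, 0 ≤ lam i) ∧ (∑ i, lam i = 1) ∧
      (∀ a c', y a c' = ∑ i, lam i * xs i a c') := by
  push_neg at hfr
  have hint : I.Integral y := by
    intro a c'
    have := hfr (a, c')
    rw [fracP] at this
    exact not_not.1 this
  exact ⟨1, fun _ => y, fun _ => 1, fun _ => ⟨hy, hint⟩, fun _ => zero_le_one,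
    by simp, fun a c' => by simp⟩

lemma dec (hpre : I.TotalPreorder) (hval : I.Valid x) :
    ∀ (n : ℕ) (y : A → C → ℝ), memP I x y → msr I y ≤ n →
    ∃ (k : ℕ) (xs : Fin k → A → C → ℝ) (lam : Fin k → ℝ),
      (∀ i, memP I x (xs i) ∧ I.Integral (xs i)) ∧
      (∀ i, 0 ≤ lam i) ∧ (∑ i, lam i = 1) ∧
      (∀ a c', y a c' = ∑ i, lam i * xs i a c') := by
  intro n
  induction n with
  | zero =>
    intro y hy hm
    refine dec_int hy ?_
    rintro ⟨e, he⟩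
    have h1 : 1 ≤ (univ.filter (fracP y)).card :=
      Finset.card_pos.2 ⟨e, mem_filter.2 ⟨mem_univ _, he⟩⟩
    have : 1 ≤ msr I y := by
      rw [msr]; omega
    omega
  | succ n ih =>
    intro y hy hm
    by_cases hfr : ∃ e : A × C, fracP y e
    · obtain ⟨σ, hσne, hσsupp, hσr, hσc⟩ :=
        kernel I.quota hy.1 hy.2.2.1 hy.2.2.2.2.1 hfr
      have hσsupp' : ∀ a c', σ a c' ≠ 0 → fracP y (a, c') := hσsupp
      obtain ⟨ε₁, hε₁, hP1, hm1⟩ := move hy σ hσne hσsupp' hσr hσc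
      have hnegne : (fun a c' => - σ a c') ≠ 0 := by
        intro h0
        apply hσne
        funext a c'
        have := congrFun (congrFun h0 a) c'
        simpa using this
      have hnegsupp : ∀ a c', (fun a c' => - σ a c') a c' ≠ 0 → fracP y (a, c') := by
        intro a c' h
        exact hσsupp a c' (by simpa using h)
      have hnegr : ∀ a, rsum y a = 1 → rsum (fun a c' => - σ a c') a = 0 := by
        intro a h
        have := hσr a h
        simp only [rsum] at this ⊢
        rw [Finset.sum_neg_distrib]
        simp [this]
      have hnegc : ∀ c', csum y c' = (I.quota c' : ℝ) → csum (fun a c' => - σ a c') c' = 0 := by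
        intro c' h
        have := hσc c' h
        simp only [csum] at this ⊢
        rw [Finset.sum_neg_distrib]
        simp [this]
      obtain ⟨ε₂, hε₂, hP2, hm2⟩ := move hy (fun a c' => - σ a c') hnegne hnegsupp hnegr hnegc
      set y1 : A → C → ℝ := fun a c' => y a c' + ε₁ * σ a c' with hy1
      set y2 : A → C → ℝ := fun a c' => y a c' + ε₂ * (fun a c' => - σ a c') a c' with hy2
      have hm1' : msr I y1 ≤ n := by omega
      have hm2' : msr I y2 ≤ n := by omega
      obtain ⟨k1, xs1, lam1, H1, H2, H3, H4⟩ := ih y1 hP1 hm1'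
      obtain ⟨k2, xs2, lam2, G1, G2, G3, G4⟩ := ih y2 hP2 hm2'
      have hsumpos : 0 < ε₁ + ε₂ := by linarith
      set l : ℝ := ε₂ / (ε₁ + ε₂) with hl
      have hl0 : 0 < l := div_pos hε₂ hsumpos
      have hl1 : l < 1 := by
        rw [hl, div_lt_one hsumpos]
        linarith
      have hcomb : ∀ a c', y a c' = l * y1 a c' + (1 - l) * y2 a c' := by
        intro a c'
        simp only [hy1, hy2, hl]
        field_simp
        ring
      refine ⟨k1 + k2, Fin.append xs1 xs2,
        Fin.append (fun i => l * lam1 i) (fun i => (1 - l) * lam2 i), ?_, ?_, ?_, ?_⟩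
      · intro i
        refine Fin.addCases (motive := fun i => memP I x (Fin.append xs1 xs2 i) ∧
          I.Integral (Fin.append xs1 xs2 i)) ?_ ?_ i
        · intro j
          rw [Fin.append_left]
          exact H1 j
        · intro j
          rw [Fin.append_right]
          exact G1 j
      · intro i
        refine Fin.addCases (motive := fun i =>
          0 ≤ Fin.append (fun i => l * lam1 i) (fun i => (1 - l) * lam2 i) i) ?_ ?_ i
        · intro j
          rw [Fin.append_left]
          exact mul_nonneg (le_of_lt hl0) (H2 j)
        · intro j
          rw [Fin.append_right]
          exact mul_nonneg (by linarith) (G2 j)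
      · rw [Fin.sum_univ_add]
        have e1 : (∑ i : Fin k1, Fin.append (fun i => l * lam1 i)
            (fun i => (1 - l) * lam2 i) (Fin.castAdd k2 i)) = l * ∑ i, lam1 i := by
          rw [Finset.mul_sum]
          refine Finset.sum_congr rfl fun i _ => ?_
          rw [Fin.append_left]
        have e2 : (∑ i : Fin k2, Fin.append (fun i => l * lam1 i)
            (fun i => (1 - l) * lam2 i) (Fin.natAdd k1 i)) = (1 - l) * ∑ i, lam2 i := by
          rw [Finset.mul_sum]
          refine Finset.sum_congr rfl fun i _ => ?_
          rw [Fin.append_right]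
        rw [e1, e2, H3, G3]
        ring
      · intro a c'
        rw [Fin.sum_univ_add]
        have e1 : (∑ i : Fin k1, Fin.append (fun i => l * lam1 i)
              (fun i => (1 - l) * lam2 i) (Fin.castAdd k2 i)
              * Fin.append xs1 xs2 (Fin.castAdd k2 i) a c')
            = l * ∑ i, lam1 i * xs1 i a c' := by
          rw [Finset.mul_sum]
          refine Finset.sum_congr rfl fun i _ => ?_
          rw [Fin.append_left, Fin.append_left]
          ring
        have e2 : (∑ i : Fin k2, Fin.append (fun i => l * lam1 i)
              (fun i => (1 - l) * lam2 i) (Fin.natAdd k1 i)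
              * Fin.append xs1 xs2 (Fin.natAdd k1 i) a c')
            = (1 - l) * ∑ i, lam2 i * xs2 i a c' := by
          rw [Finset.mul_sum]
          refine Finset.sum_congr rfl fun i _ => ?_
          rw [Fin.append_right, Fin.append_right]
          ring
        rw [e1, e2, ← H4 a c', ← G4 a c']
        exact hcomb a c'
    · exact dec_int hy hfr

end Lemmas

end SRaux

/-- every valid (possibly fractional) allocation is a convex
combination of valid integral allocations. -/
theorem stmt14 {A C : Type*} [Fintype A] [Fintype C] (I : AllocInstance A C)
    (hpre : I.TotalPreorder)
    (x : A → C → ℝ) (hval : I.Valid x) :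
    ∃ (k : ℕ) (xs : Fin k → A → C → ℝ) (lam : Fin k → ℝ),
      (∀ i, I.Valid (xs i) ∧ I.Integral (xs i)) ∧
      (∀ i, 0 ≤ lam i) ∧ (∑ i, lam i = 1) ∧
      (∀ a c, x a c = ∑ i, lam i * xs i a c) := by
  classical
  have hxP : SRaux.memP I x x :=
    ⟨hval.1.1, fun _ _ h => h, hval.1.2.2.2, fun _ h => h, hval.1.2.2.1,
      fun _ hc => SRaux.tc_full hval hc⟩
  obtain ⟨k, xs, lam, h1, h2, h3, h4⟩ := SRaux.dec hpre hval (SRaux.msr I x) x hxP le_rfl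
  exact ⟨k, xs, lam, fun i => ⟨SRaux.P_valid hpre hval (h1 i).1, (h1 i).2⟩, h2, h3, h4⟩
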